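/- Let F be a countable family of countable graphs such that the domination number of each graph in F is infinite. Then FP(F) has a solution, i.e., there exists a factorization {Γ_α : α ∈ A} of the complete graph K_ℕ on vertex set ℕ such that Γ_α is isomorphic to F_α for every α. -/

import Mathlib

/-- A set `D` of vertices is dominating if every vertex not in `D` is adjacent to
some vertex of `D`. -/
def IsDominatingSet {V : Type*} (F : SimpleGraph V) (D : Set V) : Prop :=
  ∀ v ∉ D, ∃ d ∈ D, F.Adj v d

/-- An indexed family `G` of graphs is a factorization of `Λ`: each `G a` is a
(spanning) subgraph of `Λ` and the edge sets of the `G a` partition the edge set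
of `Λ`. -/
def IsFactorization {A V : Type*} (Λ : SimpleGraph V) (G : A → SimpleGraph V) : Prop :=
  (∀ a, G a ≤ Λ) ∧ ∀ e ∈ Λ.edgeSet, ∃! a, e ∈ (G a).edgeSet

namespace Stmt7

abbrev State := Set (ℕ × ℕ × ℕ)

def UsedBy (H : ℕ → SimpleGraph ℕ) (S : State) (n a b : ℕ) : Prop :=
  ∃ u v, (n, u, a) ∈ S ∧ (n, v, b) ∈ S ∧ (H n).Adj u v

lemma UsedBy.symm {H S n a b} (h : UsedBy H S n a b) : UsedBy H S n b a := by
  obtain ⟨u, v, hu, hv, huv⟩ := h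
  exact ⟨v, u, hv, hu, huv.symm⟩

lemma UsedBy.mono {H} {S S' : State} (hss : S ⊆ S') {n a b}
    (h : UsedBy H S n a b) : UsedBy H S' n a b := by
  obtain ⟨u, v, hu, hv, huv⟩ := h
  exact ⟨u, v, hss hu, hss hv, huv⟩

structure Good (H : ℕ → SimpleGraph ℕ) (S : State) : Prop where
  fin : S.Finite
  func : ∀ ⦃n u a b⦄, (n, u, a) ∈ S → (n, u, b) ∈ S → a = b
  inj : ∀ ⦃n u v a⦄, (n, u, a) ∈ S → (n, v, a) ∈ S → u = v
  disj : ∀ ⦃n m a b⦄, UsedBy H S n a b → UsedBy H S m a b → n = m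

lemma good_empty (H : ℕ → SimpleGraph ℕ) : Good H ∅ := by
  refine ⟨Set.finite_empty, ?_, ?_, ?_⟩
  · rintro n u a b h; cases h
  · rintro n u v a h; cases h
  · rintro n m a b ⟨u, v, hu, _⟩; cases hu

lemma exists_fresh {s : Set ℕ} (hs : s.Finite) : ∃ a, a ∉ s :=
  hs.infinite_compl.nonempty

def EdgeHyp (H : ℕ → SimpleGraph ℕ) : Prop := ∀ n, ∃ u v, (H n).Adj u v

def DomHyp (H : ℕ → SimpleGraph ℕ) : Prop :=
  ∀ n (D : Set ℕ), D.Finite → ∃ k, k ∉ D ∧ ∀ d ∈ D, ¬ (H n).Adj k d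

lemma stepA {H : ℕ → SimpleGraph ℕ} {S : State} (hS : Good H S) (n k : ℕ) :
    ∃ S' : State, S ⊆ S' ∧ Good H S' ∧ ∃ a, (n, k, a) ∈ S' := by
  by_cases hk : ∃ a, (n, k, a) ∈ S
  · exact ⟨S, subset_rfl, hS, hk⟩
  obtain ⟨a, ha⟩ := exists_fresh (hS.fin.image (fun x => x.2.2))
  have hafresh : ∀ ⦃m u⦄, (m, u, a) ∈ S → False := fun m u h => ha ⟨_, h, rfl⟩
  refine ⟨insert (n, k, a) S, Set.subset_insert _ _, ?_, a, Set.mem_insert _ _⟩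
  have red : ∀ ⦃m x y⦄, UsedBy H (insert (n, k, a) S) m x y →
      UsedBy H S m x y ∨ (m = n ∧ (x = a ∨ y = a)) := by
    rintro m x y ⟨u, v, hu0, hv0, hadj⟩
    rcases Set.mem_insert_iff.1 hu0 with hu | hu
    · simp only [Prod.mk.injEq] at hu
      obtain ⟨rfl, rfl, rfl⟩ := hu
      exact Or.inr ⟨rfl, Or.inl rfl⟩
    · rcases Set.mem_insert_iff.1 hv0 with hv | hv
      · simp only [Prod.mk.injEq] at hv
        obtain ⟨rfl, rfl, rfl⟩ := hv
        exact Or.inr ⟨rfl, Or.inr rfl⟩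
      · exact Or.inl ⟨u, v, hu, hv, hadj⟩
  have noA : ∀ ⦃m x y⦄, UsedBy H S m x y → x ≠ a ∧ y ≠ a := by
    rintro m x y ⟨u, v, hu, hv, _⟩
    exact ⟨fun h => hafresh (h ▸ hu), fun h => hafresh (h ▸ hv)⟩
  refine ⟨hS.fin.insert _, ?_, ?_, ?_⟩
  · rintro m u x y hx0 hy0
    rcases Set.mem_insert_iff.1 hx0 with hx | hx <;>
      rcases Set.mem_insert_iff.1 hy0 with hy | hy
    · simp only [Prod.mk.injEq] at hx hy
      grind
    · simp only [Prod.mk.injEq] at hx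
      obtain ⟨rfl, rfl, rfl⟩ := hx
      exact absurd ⟨y, hy⟩ hk
    · simp only [Prod.mk.injEq] at hy
      obtain ⟨rfl, rfl, rfl⟩ := hy
      exact absurd ⟨x, hx⟩ hk
    · exact hS.func hx hy
  · rintro m u v x hx0 hy0
    rcases Set.mem_insert_iff.1 hx0 with hx | hx <;>
      rcases Set.mem_insert_iff.1 hy0 with hy | hy
    · simp only [Prod.mk.injEq] at hx hy
      grind
    · simp only [Prod.mk.injEq] at hx
      obtain ⟨rfl, rfl, rfl⟩ := hx
      exact (hafresh hy).elim
    · simp only [Prod.mk.injEq] at hy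
      obtain ⟨rfl, rfl, rfl⟩ := hy
      exact (hafresh hx).elim
    · exact hS.inj hx hy
  · rintro m m' x y hP hQ
    rcases red hP with hP | hP <;> rcases red hQ with hQ | hQ
    · exact hS.disj hP hQ
    · rcases hQ.2 with h | h
      · exact absurd h (noA hP).1
      · exact absurd h (noA hP).2
    · rcases hP.2 with h | h
      · exact absurd h (noA hQ).1
      · exact absurd h (noA hQ).2
    · rw [hP.1, hQ.1]

lemma stepB {H : ℕ → SimpleGraph ℕ} (hD : DomHyp H) {S : State} (hS : Good H S) (n a : ℕ) :
    ∃ S' : State, S ⊆ S' ∧ Good H S' ∧ ∃ k, (n, k, a) ∈ S' := by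
  by_cases hk : ∃ k, (n, k, a) ∈ S
  · exact ⟨S, subset_rfl, hS, hk⟩
  have hdomfin : ({u | ∃ b, (n, u, b) ∈ S} : Set ℕ).Finite := by
    refine (hS.fin.image (fun x => x.2.1)).subset ?_
    rintro u ⟨b, hb⟩
    exact ⟨_, hb, rfl⟩
  obtain ⟨k, hkD, hknadj⟩ := hD n _ hdomfin
  have hkdom : ∀ ⦃b⦄, (n, k, b) ∈ S → False := fun b hb => hkD ⟨b, hb⟩
  refine ⟨insert (n, k, a) S, Set.subset_insert _ _, ?_, k, Set.mem_insert _ _⟩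
  have red : ∀ ⦃m x y⦄, UsedBy H (insert (n, k, a) S) m x y → UsedBy H S m x y := by
    rintro m x y ⟨u, v, hu0, hv0, hadj⟩
    rcases Set.mem_insert_iff.1 hu0 with hu | hu <;>
      rcases Set.mem_insert_iff.1 hv0 with hv | hv
    · simp only [Prod.mk.injEq] at hu hv
      obtain ⟨rfl, rfl, rfl⟩ := hu
      obtain ⟨-, rfl, -⟩ := hv
      exact absurd rfl hadj.ne
    · simp only [Prod.mk.injEq] at hu
      obtain ⟨rfl, rfl, rfl⟩ := hu
      exact absurd hadj (hknadj v ⟨y, hv⟩)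
    · simp only [Prod.mk.injEq] at hv
      obtain ⟨rfl, rfl, rfl⟩ := hv
      exact absurd hadj.symm (hknadj u ⟨x, hu⟩)
    · exact ⟨u, v, hu, hv, hadj⟩
  refine ⟨hS.fin.insert _, ?_, ?_, ?_⟩
  · rintro m u x y hx0 hy0
    rcases Set.mem_insert_iff.1 hx0 with hx | hx <;>
      rcases Set.mem_insert_iff.1 hy0 with hy | hy
    · simp only [Prod.mk.injEq] at hx hy
      grind
    · simp only [Prod.mk.injEq] at hx
      obtain ⟨rfl, rfl, rfl⟩ := hx
      exact (hkdom hy).elim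
    · simp only [Prod.mk.injEq] at hy
      obtain ⟨rfl, rfl, rfl⟩ := hy
      exact (hkdom hx).elim
    · exact hS.func hx hy
  · rintro m u v x hx0 hy0
    rcases Set.mem_insert_iff.1 hx0 with hx | hx <;>
      rcases Set.mem_insert_iff.1 hy0 with hy | hy
    · simp only [Prod.mk.injEq] at hx hy
      grind
    · simp only [Prod.mk.injEq] at hx
      obtain ⟨rfl, rfl, rfl⟩ := hx
      exact absurd ⟨v, hy⟩ hk
    · simp only [Prod.mk.injEq] at hy
      obtain ⟨rfl, rfl, rfl⟩ := hy
      exact absurd ⟨u, hx⟩ hk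
    · exact hS.inj hx hy
  · rintro m m' x y hP hQ
    exact hS.disj (red hP) (red hQ)

lemma stepC {H : ℕ → SimpleGraph ℕ} (hE : EdgeHyp H) {S : State} (hS : Good H S)
    (a b : ℕ) (hab : a ≠ b) :
    ∃ S' : State, S ⊆ S' ∧ Good H S' ∧ ∃ m, UsedBy H S' m a b := by
  by_cases h0 : ∃ m, UsedBy H S m a b
  · exact ⟨S, subset_rfl, hS, h0⟩
  obtain ⟨n, hn⟩ := exists_fresh (hS.fin.image (fun x => x.1))
  have hnS : ∀ ⦃u x⦄, (n, u, x) ∈ S → False := fun u x h => hn ⟨_, h, rfl⟩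
  obtain ⟨u, v, huv⟩ := hE n
  have huvne : u ≠ v := huv.ne
  set S' : State := insert (n, u, a) (insert (n, v, b) S) with hS'def
  have hmem : ∀ ⦃p : ℕ × ℕ × ℕ⦄, p ∈ S' ↔ p = (n, u, a) ∨ p = (n, v, b) ∨ p ∈ S := by
    intro p
    simp [hS'def, Set.mem_insert_iff]
  have hmem1 : (n, u, a) ∈ S' := hmem.2 (Or.inl rfl)
  have hmem2 : (n, v, b) ∈ S' := hmem.2 (Or.inr (Or.inl rfl))
  have hsub : S ⊆ S' := fun p hp => hmem.2 (Or.inr (Or.inr hp))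
  refine ⟨S', hsub, ?_, n, u, v, hmem1, hmem2, huv⟩
  have red : ∀ ⦃m x y⦄, UsedBy H S' m x y →
      UsedBy H S m x y ∨ (m = n ∧ ((x = a ∧ y = b) ∨ (x = b ∧ y = a))) := by
    rintro m x y ⟨p, q, hp0, hq0, hadj⟩
    rcases hmem.1 hp0 with hp | hp | hp <;> rcases hmem.1 hq0 with hq | hq | hq <;>
      (try simp only [Prod.mk.injEq] at hp) <;> (try simp only [Prod.mk.injEq] at hq)
    · obtain ⟨rfl, rfl, rfl⟩ := hp; obtain ⟨-, rfl, -⟩ := hq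
      exact absurd rfl hadj.ne
    · obtain ⟨rfl, rfl, rfl⟩ := hp; obtain ⟨-, rfl, rfl⟩ := hq
      exact Or.inr ⟨rfl, Or.inl ⟨rfl, rfl⟩⟩
    · obtain ⟨rfl, rfl, rfl⟩ := hp
      exact (hnS hq).elim
    · obtain ⟨rfl, rfl, rfl⟩ := hp; obtain ⟨-, rfl, rfl⟩ := hq
      exact Or.inr ⟨rfl, Or.inr ⟨rfl, rfl⟩⟩
    · obtain ⟨rfl, rfl, rfl⟩ := hp; obtain ⟨-, rfl, -⟩ := hq
      exact absurd rfl hadj.ne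
    · obtain ⟨rfl, rfl, rfl⟩ := hp
      exact (hnS hq).elim
    · obtain ⟨rfl, rfl, rfl⟩ := hq
      exact (hnS hp).elim
    · obtain ⟨rfl, rfl, rfl⟩ := hq
      exact (hnS hp).elim
    · exact Or.inl ⟨p, q, hp, hq, hadj⟩
  have noAB : ∀ ⦃m x y⦄, UsedBy H S m x y → ¬((x = a ∧ y = b) ∨ (x = b ∧ y = a)) := by
    rintro m x y hx (⟨rfl, rfl⟩ | ⟨rfl, rfl⟩)
    · exact h0 ⟨m, hx⟩
    · exact h0 ⟨m, hx.symm⟩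
  refine ⟨((hS.fin.insert _).insert _), ?_, ?_, ?_⟩
  · rintro m w x y hx0 hy0
    rcases hmem.1 hx0 with hx | hx | hx <;> rcases hmem.1 hy0 with hy | hy | hy <;>
      (try simp only [Prod.mk.injEq] at hx) <;> (try simp only [Prod.mk.injEq] at hy)
    · grind
    · obtain ⟨rfl, rfl, rfl⟩ := hx; obtain ⟨-, h, -⟩ := hy
      exact absurd h huvne
    · obtain ⟨rfl, rfl, rfl⟩ := hx; exact (hnS hy).elim
    · obtain ⟨rfl, rfl, rfl⟩ := hy; obtain ⟨-, h, -⟩ := hx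
      exact absurd h huvne
    · grind
    · obtain ⟨rfl, rfl, rfl⟩ := hx; exact (hnS hy).elim
    · obtain ⟨rfl, rfl, rfl⟩ := hy; exact (hnS hx).elim
    · obtain ⟨rfl, rfl, rfl⟩ := hy; exact (hnS hx).elim
    · exact hS.func hx hy
  · rintro m w w' x hx0 hy0
    rcases hmem.1 hx0 with hx | hx | hx <;> rcases hmem.1 hy0 with hy | hy | hy <;>
      (try simp only [Prod.mk.injEq] at hx) <;> (try simp only [Prod.mk.injEq] at hy)
    · grind
    · obtain ⟨rfl, rfl, rfl⟩ := hx; obtain ⟨-, -, h⟩ := hy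
      exact absurd h hab
    · obtain ⟨rfl, rfl, rfl⟩ := hx; exact (hnS hy).elim
    · obtain ⟨rfl, rfl, rfl⟩ := hy; obtain ⟨-, -, h⟩ := hx
      exact absurd h hab
    · grind
    · obtain ⟨rfl, rfl, rfl⟩ := hx; exact (hnS hy).elim
    · obtain ⟨rfl, rfl, rfl⟩ := hy; exact (hnS hx).elim
    · obtain ⟨rfl, rfl, rfl⟩ := hy; exact (hnS hx).elim
    · exact hS.inj hx hy
  · rintro m m' x y hP hQ
    rcases red hP with hP | hP <;> rcases red hQ with hQ | hQ
    · exact hS.disj hP hQ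
    · exact absurd hQ.2 (noAB hP)
    · exact absurd hP.2 (noAB hQ)
    · rw [hP.1, hQ.1]

def goal (H : ℕ → SimpleGraph ℕ) (c n k : ℕ) (S : State) : Prop :=
  if c % 3 = 0 then ∃ a, (n, k, a) ∈ S
  else if c % 3 = 1 then ∃ u, (n, u, k) ∈ S
  else (n = k ∨ ∃ m, UsedBy H S m n k)

lemma extend {H : ℕ → SimpleGraph ℕ} (hE : EdgeHyp H) (hD : DomHyp H)
    {S : State} (hS : Good H S) (c n k : ℕ) :
    ∃ S' : State, S ⊆ S' ∧ Good H S' ∧ goal H c n k S' := by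
  unfold goal
  split_ifs
  · exact stepA hS n k
  · exact stepB hD hS n k
  · by_cases hnk : n = k
    · exact ⟨S, subset_rfl, hS, Or.inl hnk⟩
    · obtain ⟨S', h1, h2, h3⟩ := stepC hE hS n k hnk
      exact ⟨S', h1, h2, Or.inr h3⟩

open Classical in
noncomputable def chain (H : ℕ → SimpleGraph ℕ) (hE : EdgeHyp H) (hD : DomHyp H) :
    ℕ → State
  | 0 => ∅
  | (t + 1) =>
    if h : Good H (chain H hE hD t) then
      (extend hE hD h (Denumerable.ofNat (ℕ × ℕ × ℕ) t).1
        (Denumerable.ofNat (ℕ × ℕ × ℕ) t).2.1 (Denumerable.ofNat (ℕ × ℕ × ℕ) t).2.2).choose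
    else ∅

variable {H : ℕ → SimpleGraph ℕ} (hE : EdgeHyp H) (hD : DomHyp H)

lemma chain_good : ∀ t, Good H (chain H hE hD t)
  | 0 => good_empty H
  | (t + 1) => by
    rw [chain, dif_pos (chain_good t)]
    exact (extend hE hD (chain_good t) _ _ _).choose_spec.2.1

lemma chain_subset_succ (t : ℕ) : chain H hE hD t ⊆ chain H hE hD (t + 1) := by
  rw [chain, dif_pos (chain_good hE hD t)]
  exact (extend hE hD (chain_good hE hD t) _ _ _).choose_spec.1

lemma chain_goal (t : ℕ) :
    goal H (Denumerable.ofNat (ℕ × ℕ × ℕ) t).1 (Denumerable.ofNat (ℕ × ℕ × ℕ) t).2.1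
      (Denumerable.ofNat (ℕ × ℕ × ℕ) t).2.2 (chain H hE hD (t + 1)) := by
  rw [chain, dif_pos (chain_good hE hD t)]
  exact (extend hE hD (chain_good hE hD t) _ _ _).choose_spec.2.2

lemma chain_mono {s t : ℕ} (hst : s ≤ t) : chain H hE hD s ⊆ chain H hE hD t := by
  induction t with
  | zero => rw [Nat.le_zero.1 hst]
  | succ t ih =>
    rcases Nat.le_succ_iff_eq_or_le.mp hst with h | h
    · rw [h]
    · exact fun p hp => chain_subset_succ hE hD t (ih h hp)

def limit (H : ℕ → SimpleGraph ℕ) (hE : EdgeHyp H) (hD : DomHyp H) : State :=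
  ⋃ t, chain H hE hD t

lemma mem_limit {p : ℕ × ℕ × ℕ} :
    p ∈ limit H hE hD ↔ ∃ t, p ∈ chain H hE hD t := Set.mem_iUnion

lemma limit_func {n u a b : ℕ} (ha : (n, u, a) ∈ limit H hE hD)
    (hb : (n, u, b) ∈ limit H hE hD) : a = b := by
  obtain ⟨s, hs⟩ := mem_limit hE hD |>.1 ha
  obtain ⟨t, ht⟩ := mem_limit hE hD |>.1 hb
  exact (chain_good hE hD (max s t)).func
    (chain_mono hE hD (le_max_left s t) hs) (chain_mono hE hD (le_max_right s t) ht)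

lemma limit_inj {n u v a : ℕ} (ha : (n, u, a) ∈ limit H hE hD)
    (hb : (n, v, a) ∈ limit H hE hD) : u = v := by
  obtain ⟨s, hs⟩ := mem_limit hE hD |>.1 ha
  obtain ⟨t, ht⟩ := mem_limit hE hD |>.1 hb
  exact (chain_good hE hD (max s t)).inj
    (chain_mono hE hD (le_max_left s t) hs) (chain_mono hE hD (le_max_right s t) ht)

lemma limit_usedBy {n a b : ℕ} (h : UsedBy H (limit H hE hD) n a b) :
    ∃ t, UsedBy H (chain H hE hD t) n a b := by
  obtain ⟨u, v, hu, hv, huv⟩ := h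
  obtain ⟨s, hs⟩ := mem_limit hE hD |>.1 hu
  obtain ⟨t, ht⟩ := mem_limit hE hD |>.1 hv
  exact ⟨max s t, u, v, chain_mono hE hD (le_max_left s t) hs,
    chain_mono hE hD (le_max_right s t) ht, huv⟩

lemma limit_disj {n m a b : ℕ} (hn : UsedBy H (limit H hE hD) n a b)
    (hm : UsedBy H (limit H hE hD) m a b) : n = m := by
  obtain ⟨s, hs⟩ := limit_usedBy hE hD hn
  obtain ⟨t, ht⟩ := limit_usedBy hE hD hm
  exact (chain_good hE hD (max s t)).disj
    (hs.mono (chain_mono hE hD (le_max_left s t))) (ht.mono (chain_mono hE hD (le_max_right s t)))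

lemma limit_goal (c n k : ℕ) : goal H c n k (limit H hE hD) := by
  set t := Encodable.encode ((c, n, k) : ℕ × ℕ × ℕ) with htdef
  have hh := chain_goal hE hD t
  rw [htdef, Denumerable.ofNat_encode] at hh
  have hsub : chain H hE hD (t + 1) ⊆ limit H hE hD := Set.subset_iUnion _ _
  unfold goal at hh ⊢
  split_ifs at hh ⊢ with h1 h2
  · obtain ⟨a, ha⟩ := hh; exact ⟨a, hsub ha⟩
  · obtain ⟨u, hu⟩ := hh; exact ⟨u, hsub hu⟩
  · rcases hh with h | ⟨m, hm⟩
    · exact Or.inl h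
    · exact Or.inr ⟨m, hm.mono hsub⟩

lemma limit_total (n k : ℕ) : ∃ a, (n, k, a) ∈ limit H hE hD := by
  have h := limit_goal hE hD 0 n k
  unfold goal at h
  rwa [if_pos rfl] at h

lemma limit_surj (n a : ℕ) : ∃ k, (n, k, a) ∈ limit H hE hD := by
  have h := limit_goal hE hD 1 n a
  unfold goal at h
  norm_num at h
  exact h

lemma limit_cover {a b : ℕ} (hab : a ≠ b) : ∃ m, UsedBy H (limit H hE hD) m a b := by
  have h := limit_goal hE hD 2 a b
  unfold goal at h
  norm_num at h
  exact h.resolve_left hab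

theorem main (H : ℕ → SimpleGraph ℕ) (hE : EdgeHyp H) (hD : DomHyp H) :
    ∃ G : ℕ → SimpleGraph ℕ, IsFactorization (⊤ : SimpleGraph ℕ) G ∧
      ∀ n, Nonempty (H n ≃g G n) := by
  classical
  set L := limit H hE hD with hLdef
  let f : ℕ → ℕ → ℕ := fun n u => (limit_total hE hD n u).choose
  have hf : ∀ n u, (n, u, f n u) ∈ L := fun n u => (limit_total hE hD n u).choose_spec
  have hfuniq : ∀ n u a, (n, u, a) ∈ L → f n u = a := fun n u a ha =>
    limit_func hE hD (hf n u) ha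
  have hbij : ∀ n, Function.Bijective (f n) := by
    intro n
    constructor
    · intro u v huv
      exact limit_inj hE hD (hf n u) (huv ▸ hf n v)
    · intro a
      obtain ⟨k, hk⟩ := limit_surj hE hD n a
      exact ⟨k, hfuniq n k a hk⟩
  let e : ∀ n, ℕ ≃ ℕ := fun n => Equiv.ofBijective (f n) (hbij n)
  have key : ∀ m x y, (SimpleGraph.map (e m).toEmbedding (H m)).Adj x y ↔ UsedBy H L m x y := by
    intro m x y
    rw [SimpleGraph.map_adj]
    constructor
    · rintro ⟨u, v, huv, rfl, rfl⟩
      exact ⟨u, v, hf m u, hf m v, huv⟩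
    · rintro ⟨u, v, hu, hv, huv⟩
      exact ⟨u, v, huv, hfuniq m u x hu, hfuniq m v y hv⟩
  refine ⟨fun n => SimpleGraph.map (e n).toEmbedding (H n), ⟨fun n => le_top, ?_⟩,
    fun n => ⟨SimpleGraph.Iso.map (e n) (H n)⟩⟩
  intro ed hed
  induction ed using Sym2.ind with
  | _ a b =>
    rw [SimpleGraph.mem_edgeSet, SimpleGraph.top_adj] at hed
    obtain ⟨m, hm⟩ := limit_cover hE hD hed
    refine ⟨m, (SimpleGraph.mem_edgeSet _).2 ((key m a b).2 hm), ?_⟩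
    intro m' hm'
    exact limit_disj hE hD ((key m' a b).1 ((SimpleGraph.mem_edgeSet _).1 hm')) hm

end Stmt7

theorem stmt_7 (V : ℕ → Type) [∀ n, Countable (V n)]
    (F : ∀ n, SimpleGraph (V n)) (hne : ∀ n, (F n).edgeSet.Nonempty)
    (hdom : ∀ n (D : Set (V n)), IsDominatingSet (F n) D → D.Infinite) :
    ∃ G : ℕ → SimpleGraph ℕ, IsFactorization (⊤ : SimpleGraph ℕ) G ∧
      ∀ n, Nonempty (F n ≃g G n) := by
  classical
  have hinf : ∀ n, Infinite (V n) := by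
    intro n
    rw [← Set.infinite_univ_iff]
    exact hdom n Set.univ (fun v hv => absurd (Set.mem_univ v) hv)
  have hden : ∀ n, Nonempty (Denumerable (V n)) := fun n =>
    @nonempty_denumerable (V n) _ (hinf n)
  let e : ∀ n, V n ≃ ℕ := fun n => @Denumerable.eqv (V n) (Classical.choice (hden n))
  let H : ℕ → SimpleGraph ℕ := fun n => SimpleGraph.map (e n).toEmbedding (F n)
  have hE : Stmt7.EdgeHyp H := by
    intro n
    have hne' := hne n
    rw [Set.Nonempty, Sym2.exists] at hne'
    obtain ⟨u, v, hed⟩ := hne'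
    rw [SimpleGraph.mem_edgeSet] at hed
    exact ⟨e n u, e n v, (SimpleGraph.map_adj _ _ _ _).2 ⟨u, v, hed, rfl, rfl⟩⟩
  have hD : Stmt7.DomHyp H := by
    intro n D hDfin
    have hd' : ¬ IsDominatingSet (F n) ((e n).symm '' D) := fun hdm =>
      ((hDfin.image _).not_infinite) (hdom n _ hdm)
    rw [IsDominatingSet] at hd'
    push_neg at hd'
    obtain ⟨v, hv, hvadj⟩ := hd'
    refine ⟨e n v, ?_, ?_⟩
    · intro hmem
      exact hv ⟨e n v, hmem, Equiv.symm_apply_apply _ _⟩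
    · intro d hd hadj
      rw [SimpleGraph.map_adj] at hadj
      obtain ⟨u', v', hadj', hu', hv'⟩ := hadj
      simp only [Equiv.coe_toEmbedding] at hu' hv'
      have huv : u' = v := (e n).injective (by rw [hu'])
      subst huv
      exact hvadj v' ⟨d, hd, by rw [← hv', Equiv.symm_apply_apply]⟩ hadj'
  obtain ⟨G, hfact, hiso⟩ := Stmt7.main H hE hD
  exact ⟨G, hfact, fun n =>
    (hiso n).elim fun i => ⟨(SimpleGraph.Iso.map (e n) (F n)).trans i⟩⟩
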